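/- Fix m ∈ ℕ*, e ∈ ℕ*. For all n ∈ ℕ with n ≥ 1 and j := ⌈n/(em)⌉, the following holds: whenever nonneg integers i₁, …, i_j satisfy 1 ≤ i_k ≤ em and i₁ + ⋯ + i_j = n, one has ⌊i₁/m⌋ + ⋯ + ⌊i_j/m⌋ ≤ ⌊n/m⌋; moreover, there is a choice of such i₁, …, i_j attaining equality with all but at most one i_k divisible by m. -/

import Mathlib

/-!
Statement 7: Fix `m, e ∈ ℕ*`.  For `n ≥ 1` and `j := ⌈n/(em)⌉`: every decomposition
`n = i₁ + ⋯ + i_j` with `1 ≤ i_k ≤ em` satisfies `Σ ⌊i_k/m⌋ ≤ ⌊n/m⌋`; moreover some such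
decomposition attains `Σ ⌊i_k/m⌋ = ⌊n/m⌋` with all but at most one `i_k` divisible by `m`.
-/

lemma aux_sum_div_le {α : Type*} (s : Finset α) (f : α → ℕ) (m : ℕ) :
    ∑ k ∈ s, f k / m ≤ (∑ k ∈ s, f k) / m := by
  classical
  induction s using Finset.induction_on with
  | empty => simp
  | insert _ _ h ih =>
    rw [Finset.sum_insert h, Finset.sum_insert h]
    calc _ ≤ _ / m + (∑ k ∈ _, f k) / m := by exact Nat.add_le_add_left ih _
      _ ≤ _ := Nat.add_div_le_add_div _ _ _

theorem floor_sum_decomposition (m e : ℕ) (hm : 1 ≤ m) (he : 1 ≤ e)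
    (n : ℕ) (hn : 1 ≤ n) :
    (∀ i : Fin ((n + e * m - 1) / (e * m)) → ℕ,
      (∀ k, 1 ≤ i k ∧ i k ≤ e * m) → (∑ k, i k) = n →
      (∑ k, i k / m) ≤ n / m) ∧
    (∃ i : Fin ((n + e * m - 1) / (e * m)) → ℕ,
      (∀ k, 1 ≤ i k ∧ i k ≤ e * m) ∧ (∑ k, i k) = n ∧
      (∑ k, i k / m) = n / m ∧
      ∃ k₀, ∀ k, k ≠ k₀ → m ∣ i k) := by
  classical
  set c := e * m with hc
  have hcpos : 0 < c := Nat.mul_pos he hm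
  constructor
  · intro i hi hsum
    calc ∑ k, i k / m ≤ (∑ k, i k) / m := aux_sum_div_le _ _ _
      _ = n / m := by rw [hsum]
  · -- the explicit decomposition
    have hj1 : (n + c - 1) / c = (n - 1) / c + 1 := by
      have : n + c - 1 = (n - 1) + c := by omega
      rw [this, Nat.add_div_right _ hcpos]
    set j := (n + c - 1) / c with hjdef
    have hjpos : 0 < j := by rw [hj1]; exact Nat.succ_pos _
    have hlt : (j - 1) * c < n := by
      have h1 : (n - 1) / c * c ≤ n - 1 := Nat.div_mul_le_self _ _
      have h2 : j - 1 = (n - 1) / c := by omega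
      have h3 : (j - 1) * c = (n - 1) / c * c := by rw [h2]
      omega
    have hle : n ≤ j * c := by
      have h1 := Nat.div_add_mod (n - 1) c
      have h2 : (n - 1) % c < c := Nat.mod_lt _ hcpos
      have h3 : j * c = (n - 1) / c * c + c := by rw [hj1]; ring
      have h4 : c * ((n - 1) / c) = (n - 1) / c * c := Nat.mul_comm _ _
      omega
    set r := n - (j - 1) * c with hr
    have hr1 : 1 ≤ r := by omega
    have hrc : r ≤ c := by
      have : j * c = (j - 1) * c + c := by
        have : j = (j - 1) + 1 := by omega
        nth_rewrite 1 [this]; ring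
      omega
    set k₀ : Fin j := ⟨0, hjpos⟩ with hk₀
    refine ⟨fun k => if k = k₀ then r else c, ?_, ?_, ?_, k₀, ?_⟩
    · intro k
      by_cases h : k = k₀ <;> simp [h] <;> omega
    · rw [← Finset.add_sum_erase _ _ (Finset.mem_univ k₀)]
      have herase : ∑ k ∈ Finset.univ.erase k₀, (if k = k₀ then r else c) = (j - 1) * c := by
        rw [Finset.sum_congr rfl (fun k hk => if_neg (Finset.ne_of_mem_erase hk))]
        rw [Finset.sum_const, Finset.card_erase_of_mem (Finset.mem_univ k₀),
          Finset.card_univ, Fintype.card_fin, smul_eq_mul]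
      rw [herase, if_pos rfl]
      omega
    · rw [← Finset.add_sum_erase _ _ (Finset.mem_univ k₀)]
      have herase : ∑ k ∈ Finset.univ.erase k₀, (if k = k₀ then r else c) / m
          = (j - 1) * e := by
        have : ∀ k ∈ Finset.univ.erase k₀, (if k = k₀ then r else c) / m = e := by
          intro k hk
          rw [if_neg (Finset.ne_of_mem_erase hk), hc, Nat.mul_div_cancel _ hm]
        rw [Finset.sum_congr rfl this, Finset.sum_const,
          Finset.card_erase_of_mem (Finset.mem_univ k₀),
          Finset.card_univ, Fintype.card_fin, smul_eq_mul]
      rw [herase]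
      dsimp only
      rw [if_pos rfl]
      have hn' : n = r + (j - 1) * e * m := by
        have : (j - 1) * e * m = (j - 1) * c := by rw [hc]; ring
        omega
      rw [hn', Nat.add_mul_div_right _ _ hm]
    · intro k hk
      dsimp only
      rw [if_neg hk, hc]
      exact dvd_mul_left m e
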